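/- For n ≥ 3, the spectral radius ρ of the graph Q_n^1 satisfies ρ⁴ − (n² − 2n + 2)ρ² + 2(n−1)(n−2) = 0; explicitly ρ² = ((n² − 2n + 2) + √((n² − 2n + 2)² − 8(n−1)(n−2)))/2. -/

import Mathlib

open SimpleGraph

attribute [local instance] Classical.propDecidable

/-- The (adjacency) spectral radius of a graph, as the largest adjacency eigenvalue. -/
noncomputable def specRad {V : Type*} [Fintype V] [DecidableEq V] (G : SimpleGraph V) : ℝ :=
  sSup (spectrum ℝ (G.adjMatrix ℝ))

/-- The signless Laplacian matrix `Q = D + A` of a graph. -/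
noncomputable def signlessLaplacian {V : Type*} [Fintype V] [DecidableEq V]
    (G : SimpleGraph V) : Matrix V V ℝ :=
  Matrix.diagonal (fun v => (G.degree v : ℝ)) + G.adjMatrix ℝ

/-- The signless Laplacian spectral radius of a graph. -/
noncomputable def qSpec {V : Type*} [Fintype V] [DecidableEq V] (G : SimpleGraph V) : ℝ :=
  sSup (spectrum ℝ (signlessLaplacian G))

/-- A graph is traceable if it has a Hamilton path. -/
def SimpleGraph.IsTraceable {V : Type*} (G : SimpleGraph V) : Prop :=
  ∃ (u v : V) (p : G.Walk u v), p.IsHamiltonian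

/-- A graph on `Fin m ⊕ Fin n` is bipartite with bipartition `{Fin m, Fin n}`:
all edges go between the two parts. -/
def CrossOnly {m n : ℕ} (G : SimpleGraph (Fin m ⊕ Fin n)) : Prop :=
  (∀ x y : Fin m, ¬ G.Adj (Sum.inl x) (Sum.inl y)) ∧
  (∀ x y : Fin n, ¬ G.Adj (Sum.inr x) (Sum.inr y))

/-- The graph `Q_n^k = K_{k,n-k-1} ⊔ Φ_{n-k,k+1}`: a vertex `inl x` with `x < k` is joined to
all of the right side, a vertex `inr y` with `y < n-k-1` is joined to all of the left side,
and there are no other edges. -/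
def Qgraph (n k : ℕ) : SimpleGraph (Fin n ⊕ Fin n) :=
  SimpleGraph.fromRel (fun a b =>
    match a, b with
    | Sum.inl x, Sum.inr y => x.val < k ∨ y.val < n - k - 1
    | _, _ => False)

/-- The graph `R_n^k = K_{k,k} ∪ K_{n-k,n-k}` (disjoint union). -/
def Rgraph (n k : ℕ) : SimpleGraph (Fin n ⊕ Fin n) :=
  SimpleGraph.fromRel (fun a b =>
    match a, b with
    | Sum.inl x, Sum.inr y => (x.val < k ∧ y.val < k) ∨ (k ≤ x.val ∧ k ≤ y.val)
    | _, _ => False)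

/-- The graph `S_n^k = K_{k,n-k-1} ⊔ Φ_{n-k,k}` on parts of sizes `n` and `n-1`. -/
def Sgraph (n k : ℕ) : SimpleGraph (Fin n ⊕ Fin (n - 1)) :=
  SimpleGraph.fromRel (fun a b =>
    match a, b with
    | Sum.inl x, Sum.inr y => x.val < k ∨ y.val < n - k - 1
    | _, _ => False)

/-- The quasi-complement of a bipartite graph: `inl x` and `inr y` are adjacent iff they are
nonadjacent in `G`; no edges inside the parts. -/
def quasiComplement {m n : ℕ} (G : SimpleGraph (Fin m ⊕ Fin n)) : SimpleGraph (Fin m ⊕ Fin n) :=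
  SimpleGraph.fromRel (fun a b =>
    match a, b with
    | Sum.inl x, Sum.inr y => ¬ G.Adj (Sum.inl x) (Sum.inr y)
    | _, _ => False)

/-- `G` is isomorphic to a subgraph of `H`. -/
def IsoSubgraph {V W : Type*} (G : SimpleGraph V) (H : SimpleGraph W) : Prop :=
  ∃ H' : SimpleGraph W, H' ≤ H ∧ Nonempty (G ≃g H')

section QAuxSection
open Matrix

namespace QAux

lemma vv_mul {V : Type*} [Fintype V] (a b c d : V → ℝ) :
    vecMulVec a b * vecMulVec c d = (b ⬝ᵥ c) • vecMulVec a d := by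
  ext i j
  simp only [Matrix.mul_apply, Matrix.vecMulVec_apply, Matrix.smul_apply, dotProduct,
    Finset.sum_mul, smul_eq_mul]
  apply Finset.sum_congr rfl; intros; ring

lemma vv_mulVec {V : Type*} [Fintype V] (a b v : V → ℝ) :
    (vecMulVec a b).mulVec v = (b ⬝ᵥ v) • a := by
  ext i
  simp only [Matrix.mulVec, dotProduct, Matrix.vecMulVec_apply, Pi.smul_apply,
    smul_eq_mul, Finset.sum_mul, Finset.mul_sum]
  apply Finset.sum_congr rfl; intros; ring

lemma sum_fin_if_lt (n m : ℕ) (h : m ≤ n) (a b : ℝ) :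
    ∑ i : Fin n, (if (i : ℕ) < m then a else b) = m * a + ((n : ℝ) - m) * b := by
  rw [Fin.sum_univ_eq_sum_range (fun i => if i < m then a else b), Finset.sum_ite]
  have h1 : (Finset.range n).filter (fun i => i < m) = Finset.range m := by
    ext i; simp only [Finset.mem_filter, Finset.mem_range]; omega
  have h2 : (Finset.range n).filter (fun i => ¬ i < m) = Finset.range n \ Finset.range m := by
    rw [← h1, Finset.filter_not]
  rw [h1, h2, Finset.sum_const, Finset.sum_const, Finset.card_range,
    Finset.card_sdiff_of_subset (Finset.range_subset_range.2 h), Finset.card_range, Finset.card_range,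
    nsmul_eq_mul, nsmul_eq_mul]
  push_cast [h]
  ring

noncomputable def uvec (n : ℕ) : (Fin n ⊕ Fin n) → ℝ :=
  Sum.elim (fun x => if (x : ℕ) < 1 then 1 else 0) 0
noncomputable def evec (n : ℕ) : (Fin n ⊕ Fin n) → ℝ :=
  Sum.elim (fun x => if (x : ℕ) < 1 then 0 else 1) 0
noncomputable def rvec (n : ℕ) : (Fin n ⊕ Fin n) → ℝ := Sum.elim 0 1
noncomputable def wvec (n : ℕ) : (Fin n ⊕ Fin n) → ℝ :=
  Sum.elim 0 (fun y => if (y : ℕ) < n - 2 then 1 else 0)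

lemma dot_elim_l {n : ℕ} (f g : Fin n → ℝ) :
    (Sum.elim f 0 : Fin n ⊕ Fin n → ℝ) ⬝ᵥ Sum.elim g 0 = ∑ i : Fin n, f i * g i := by
  simp [dotProduct, Fintype.sum_sum_type]

lemma dot_elim_r {n : ℕ} (f g : Fin n → ℝ) :
    (Sum.elim 0 f : Fin n ⊕ Fin n → ℝ) ⬝ᵥ Sum.elim 0 g = ∑ i : Fin n, f i * g i := by
  simp [dotProduct, Fintype.sum_sum_type]


lemma sum_if_mul (n m : ℕ) (a b a' b' : ℝ) :
    ∑ i : Fin n, (if (i:ℕ) < m then a else b) * (if (i:ℕ) < m then a' else b')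
      = ∑ i : Fin n, (if (i:ℕ) < m then a * a' else b * b') :=
  Finset.sum_congr rfl fun i _ => by split <;> rfl

section dots
set_option linter.unusedSectionVars false
variable {n : ℕ} (hn : 3 ≤ n)
include hn

lemma cast_sub2 : ((n - 2 : ℕ) : ℝ) = (n : ℝ) - 2 := by
  rw [Nat.cast_sub (by omega)]; norm_num

lemma dot_uu : uvec n ⬝ᵥ uvec n = 1 := by
  rw [uvec, dot_elim_l, sum_if_mul, sum_fin_if_lt n 1 (by omega)]
  norm_num

lemma dot_ue : uvec n ⬝ᵥ evec n = 0 := by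
  rw [uvec, evec, dot_elim_l, sum_if_mul]
  simp

lemma dot_eu : evec n ⬝ᵥ uvec n = 0 := by
  rw [uvec, evec, dot_elim_l, sum_if_mul]
  simp

lemma dot_ee : evec n ⬝ᵥ evec n = (n : ℝ) - 1 := by
  rw [evec, dot_elim_l, sum_if_mul, sum_fin_if_lt n 1 (by omega)]
  norm_num

lemma dot_rr : rvec n ⬝ᵥ rvec n = (n : ℝ) := by
  rw [rvec, dot_elim_r]
  simp [Finset.card_univ]

lemma dot_rw : rvec n ⬝ᵥ wvec n = (n : ℝ) - 2 := by
  rw [rvec, wvec, dot_elim_r]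
  simp only [Pi.one_apply, one_mul]
  rw [sum_fin_if_lt n (n-2) (by omega), cast_sub2 hn]
  ring

lemma dot_wr : wvec n ⬝ᵥ rvec n = (n : ℝ) - 2 := by
  rw [rvec, wvec, dot_elim_r]
  simp only [Pi.one_apply, mul_one]
  rw [sum_fin_if_lt n (n-2) (by omega), cast_sub2 hn]
  ring

lemma dot_ww : wvec n ⬝ᵥ wvec n = (n : ℝ) - 2 := by
  rw [wvec, dot_elim_r, sum_if_mul, sum_fin_if_lt n (n-2) (by omega), cast_sub2 hn]
  norm_num

end dots

lemma dot_ur (n : ℕ) : uvec n ⬝ᵥ rvec n = 0 := by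
  simp [uvec, rvec, dotProduct, Fintype.sum_sum_type]
lemma dot_ru (n : ℕ) : rvec n ⬝ᵥ uvec n = 0 := by
  simp [uvec, rvec, dotProduct, Fintype.sum_sum_type]
lemma dot_uw (n : ℕ) : uvec n ⬝ᵥ wvec n = 0 := by
  simp [uvec, wvec, dotProduct, Fintype.sum_sum_type]
lemma dot_wu (n : ℕ) : wvec n ⬝ᵥ uvec n = 0 := by
  simp [uvec, wvec, dotProduct, Fintype.sum_sum_type]
lemma dot_er (n : ℕ) : evec n ⬝ᵥ rvec n = 0 := by
  simp [evec, rvec, dotProduct, Fintype.sum_sum_type]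
lemma dot_re (n : ℕ) : rvec n ⬝ᵥ evec n = 0 := by
  simp [evec, rvec, dotProduct, Fintype.sum_sum_type]
lemma dot_ew (n : ℕ) : evec n ⬝ᵥ wvec n = 0 := by
  simp [evec, wvec, dotProduct, Fintype.sum_sum_type]
lemma dot_we (n : ℕ) : wvec n ⬝ᵥ evec n = 0 := by
  simp [evec, wvec, dotProduct, Fintype.sum_sum_type]

lemma adj_decomp (n : ℕ) :
    (Qgraph n 1).adjMatrix ℝ =
      vecMulVec (uvec n) (rvec n) + vecMulVec (evec n) (wvec n)
      + vecMulVec (rvec n) (uvec n) + vecMulVec (wvec n) (evec n) := by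
  ext i j
  rcases i with x | x <;> rcases j with y | y <;>
    simp only [SimpleGraph.adjMatrix_apply, Qgraph, SimpleGraph.fromRel_adj, Matrix.add_apply,
      Matrix.vecMulVec_apply, uvec, evec, rvec, wvec, Sum.elim_inl, Sum.elim_inr,
      Pi.zero_apply, Pi.one_apply, mul_zero, zero_mul, mul_one, one_mul, add_zero, zero_add,
      ne_eq, reduceCtorEq, not_false_iff, true_and, or_false, false_or]
  · simp
  · have h21 : n - 1 - 1 = n - 2 := by omega
    simp only [h21]
    by_cases hx : (x:ℕ) < 1 <;> by_cases hy : (y:ℕ) < n - 2 <;> simp [hx, hy] <;> omega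
  · have h21 : n - 1 - 1 = n - 2 := by omega
    simp only [h21]
    by_cases hx : (y:ℕ) < 1 <;> by_cases hy : (x:ℕ) < n - 2 <;> simp [hx, hy] <;> omega
  · simp


lemma adj_sq {n : ℕ} (hn : 3 ≤ n) :
    (Qgraph n 1).adjMatrix ℝ * (Qgraph n 1).adjMatrix ℝ =
      (n:ℝ) • vecMulVec (uvec n) (uvec n) + ((n:ℝ)-2) • vecMulVec (uvec n) (evec n)
      + ((n:ℝ)-2) • vecMulVec (evec n) (uvec n) + ((n:ℝ)-2) • vecMulVec (evec n) (evec n)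
      + vecMulVec (rvec n) (rvec n) + ((n:ℝ)-1) • vecMulVec (wvec n) (wvec n) := by
  rw [adj_decomp n]
  simp only [add_mul, mul_add, vv_mul, dot_uu hn, dot_ue hn, dot_eu hn, dot_ee hn, dot_rr hn,
    dot_rw hn, dot_wr hn, dot_ww hn, dot_ur n, dot_ru n, dot_uw n, dot_wu n, dot_er n,
    dot_re n, dot_ew n, dot_we n, zero_smul, one_smul, add_zero, zero_add,
    smul_mul_assoc, mul_smul_comm, smul_smul, smul_zero, smul_add]
  module

lemma adj_cube {n : ℕ} (hn : 3 ≤ n) :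
    (Qgraph n 1).adjMatrix ℝ * (Qgraph n 1).adjMatrix ℝ * (Qgraph n 1).adjMatrix ℝ =
      (n:ℝ) • vecMulVec (uvec n) (rvec n)
      + (((n:ℝ)-1)*((n:ℝ)-2)) • vecMulVec (uvec n) (wvec n)
      + ((n:ℝ)-2) • vecMulVec (evec n) (rvec n)
      + (((n:ℝ)-1)*((n:ℝ)-2)) • vecMulVec (evec n) (wvec n)
      + (n:ℝ) • vecMulVec (rvec n) (uvec n)
      + ((n:ℝ)-2) • vecMulVec (rvec n) (evec n)
      + (((n:ℝ)-1)*((n:ℝ)-2)) • vecMulVec (wvec n) (uvec n)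
      + (((n:ℝ)-1)*((n:ℝ)-2)) • vecMulVec (wvec n) (evec n) := by
  rw [adj_sq hn, adj_decomp n]
  simp only [add_mul, mul_add, vv_mul, dot_uu hn, dot_ue hn, dot_eu hn, dot_ee hn, dot_rr hn,
    dot_rw hn, dot_wr hn, dot_ww hn, dot_ur n, dot_ru n, dot_uw n, dot_wu n, dot_er n,
    dot_re n, dot_ew n, dot_we n, zero_smul, one_smul, add_zero, zero_add,
    smul_mul_assoc, mul_smul_comm, smul_smul, smul_zero, smul_add]
  module

lemma adj_key {n : ℕ} (hn : 3 ≤ n) :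
    ((Qgraph n 1).adjMatrix ℝ) ^ 5 + (2*((n:ℝ)-1)*((n:ℝ)-2)) • (Qgraph n 1).adjMatrix ℝ =
      ((n:ℝ)^2 - 2*(n:ℝ) + 2) • ((Qgraph n 1).adjMatrix ℝ) ^ 3 := by
  have h3 : ((Qgraph n 1).adjMatrix ℝ) ^ 3
      = (Qgraph n 1).adjMatrix ℝ * (Qgraph n 1).adjMatrix ℝ * (Qgraph n 1).adjMatrix ℝ := by
    rw [pow_succ, pow_two]
  have h5 : ((Qgraph n 1).adjMatrix ℝ) ^ 5
      = ((Qgraph n 1).adjMatrix ℝ * (Qgraph n 1).adjMatrix ℝ)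
        * ((Qgraph n 1).adjMatrix ℝ * (Qgraph n 1).adjMatrix ℝ * (Qgraph n 1).adjMatrix ℝ) := by
    rw [show (5:ℕ) = 2 + 3 from rfl, pow_add, pow_two, h3]
  rw [h3, h5, adj_cube hn, adj_sq hn, adj_decomp n]
  simp only [add_mul, mul_add, vv_mul, dot_uu hn, dot_ue hn, dot_eu hn, dot_ee hn, dot_rr hn,
    dot_rw hn, dot_wr hn, dot_ww hn, dot_ur n, dot_ru n, dot_uw n, dot_wu n, dot_er n,
    dot_re n, dot_ew n, dot_we n, zero_smul, one_smul, add_zero, zero_add,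
    smul_mul_assoc, mul_smul_comm, smul_smul, smul_zero, smul_add]
  module


lemma pow_mulVec {V : Type*} [Fintype V] [DecidableEq V] (A : Matrix V V ℝ) (w : V → ℝ) (μ : ℝ)
    (h : A.mulVec w = μ • w) (k : ℕ) : (A ^ k).mulVec w = μ ^ k • w := by
  induction k with
  | zero => simp
  | succ k ih =>
    rw [pow_succ, ← Matrix.mulVec_mulVec, h, Matrix.mulVec_smul, ih, smul_smul, ← pow_succ']


end QAux

end QAuxSection

open Matrix QAux in
/-- For `n ≥ 3`, the spectral radius `ρ` of `Q_n^1` satisfies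
`ρ⁴ - (n² - 2n + 2)ρ² + 2(n-1)(n-2) = 0`, and explicitly
`ρ² = ((n² - 2n + 2) + √((n² - 2n + 2)² - 8(n-1)(n-2)))/2`. -/
theorem stmt_8 (n : ℕ) (hn : 3 ≤ n) :
    (specRad (Qgraph n 1)) ^ 4 - ((n : ℝ) ^ 2 - 2 * n + 2) * (specRad (Qgraph n 1)) ^ 2
        + 2 * ((n : ℝ) - 1) * ((n : ℝ) - 2) = 0 ∧
    (specRad (Qgraph n 1)) ^ 2 =
      (((n : ℝ) ^ 2 - 2 * n + 2) +
        Real.sqrt (((n : ℝ) ^ 2 - 2 * n + 2) ^ 2 - 8 * ((n : ℝ) - 1) * ((n : ℝ) - 2))) / 2 := by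
  have hn3 : (3:ℝ) ≤ (n:ℝ) := by exact_mod_cast hn
  set A := (Qgraph n 1).adjMatrix ℝ with hA
  set s : ℝ := (n:ℝ)^2 - 2*n + 2 with hs
  set d : ℝ := Real.sqrt (s^2 - 8*((n:ℝ)-1)*((n:ℝ)-2)) with hd
  set lam : ℝ := (s + d)/2 with hlam
  have hne2 : (n:ℝ) - 2 ≠ 0 := by linarith
  have hdisc : (0:ℝ) ≤ s^2 - 8*((n:ℝ)-1)*((n:ℝ)-2) := by
    rw [hs]; nlinarith [sq_nonneg ((n:ℝ)^2 - 2*n - 2), hn3]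
  have hd2 : d^2 = s^2 - 8*((n:ℝ)-1)*((n:ℝ)-2) := Real.sq_sqrt hdisc
  have hd0 : 0 ≤ d := Real.sqrt_nonneg _
  have hs_pos : 0 < s := by rw [hs]; nlinarith [sq_nonneg ((n:ℝ)-1)]
  have hlam_pos : 0 < lam := by rw [hlam]; linarith
  have hlam_eq : lam^2 - s*lam + 2*((n:ℝ)-1)*((n:ℝ)-2) = 0 := by
    rw [hlam]; linear_combination hd2 / 4
  clear_value d
  clear_value lam
  set rho := Real.sqrt lam with hrho
  have hrho2 : rho^2 = lam := Real.sq_sqrt hlam_pos.le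
  have hrho_pos : 0 < rho := Real.sqrt_pos.mpr hlam_pos
  have hrho_le : ∀ μ : ℝ, 0 < μ → μ^2 ≤ lam → μ ≤ rho := by
    intro μ h1 h2
    rw [hrho]
    calc μ = Real.sqrt (μ^2) := (Real.sqrt_sq h1.le).symm
      _ ≤ Real.sqrt lam := Real.sqrt_le_sqrt h2
  clear_value rho
  -- eigenvector
  set δ : ℝ := (lam - n)/((n:ℝ)-2) with hδ
  set β : ℝ := (1+δ)*((n:ℝ)-2)/rho with hβ
  set v : (Fin n ⊕ Fin n) → ℝ := rho • uvec n + β • evec n + rvec n + δ • wvec n with hv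
  have dotr : rvec n ⬝ᵥ v = rho * rho := by
    rw [hv]
    simp only [dotProduct_add, dotProduct_smul, dot_ru n, dot_re n, dot_rr hn,
      dot_rw hn, smul_eq_mul, mul_zero, zero_add, add_zero]
    rw [show rho * rho = lam from by rw [← sq, hrho2], hδ]
    field_simp
    ring
  have dotw : wvec n ⬝ᵥ v = rho * β := by
    rw [hv]
    simp only [dotProduct_add, dotProduct_smul, dot_wu n, dot_we n, dot_wr hn,
      dot_ww hn, smul_eq_mul, mul_zero, zero_add, add_zero]
    rw [hβ]
    field_simp
  have dotu : uvec n ⬝ᵥ v = rho * 1 := by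
    rw [hv]
    simp only [dotProduct_add, dotProduct_smul, dot_uu hn, dot_ue hn, dot_ur n,
      dot_uw n, smul_eq_mul, mul_zero, mul_one, zero_add, add_zero]
  have dote : evec n ⬝ᵥ v = rho * δ := by
    have haux : (1+δ)*((n:ℝ)-2)*((n:ℝ)-1) = lam * δ := by
      rw [hδ]; field_simp; linear_combination -hlam_eq
    rw [hv]
    simp only [dotProduct_add, dotProduct_smul, dot_eu hn, dot_ee hn, dot_er n,
      dot_ew n, smul_eq_mul, mul_zero, mul_one, zero_add, add_zero]
    rw [hβ, div_mul_eq_mul_div, div_eq_iff hrho_pos.ne']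
    linear_combination haux - δ * hrho2
  have hAv : A.mulVec v = rho • v := by
    rw [hA, adj_decomp n]
    simp only [Matrix.add_mulVec, vv_mulVec, dotr, dotw, dotu, dote]
    rw [hv]
    module
  have hvne : v ≠ 0 := by
    intro h0
    have h1 : v (Sum.inr ⟨n-1, by omega⟩) = 0 := by rw [h0]; rfl
    rw [hv] at h1
    simp only [Pi.add_apply, Pi.smul_apply, uvec, evec, rvec, wvec, Sum.elim_inr,
      Pi.zero_apply, Pi.one_apply, smul_eq_mul, mul_zero, zero_add, add_zero] at h1
    rw [if_neg (by simp; omega)] at h1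
    simp at h1
  have hmem : rho ∈ spectrum ℝ A := by
    rw [spectrum.mem_iff]
    intro hu
    rw [Matrix.isUnit_iff_isUnit_det, isUnit_iff_ne_zero] at hu
    apply hu
    rw [← Matrix.exists_mulVec_eq_zero_iff]
    refine ⟨v, hvne, ?_⟩
    rw [Matrix.sub_mulVec, Algebra.algebraMap_eq_smul_one, Matrix.smul_mulVec,
      Matrix.one_mulVec, hAv, sub_self]
  have hub : ∀ μ ∈ spectrum ℝ A, μ ≤ rho := by
    intro μ hμ
    rw [spectrum.mem_iff] at hμ
    rw [Matrix.isUnit_iff_isUnit_det, isUnit_iff_ne_zero, not_not] at hμ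
    obtain ⟨w, hw0, hww⟩ := (Matrix.exists_mulVec_eq_zero_iff).mpr hμ
    rw [Matrix.sub_mulVec, Algebra.algebraMap_eq_smul_one, Matrix.smul_mulVec,
      Matrix.one_mulVec, sub_eq_zero] at hww
    have hAw : A.mulVec w = μ • w := hww.symm
    have hkey := adj_key hn
    have h5 := pow_mulVec A w μ hAw 5
    have h3 := pow_mulVec A w μ hAw 3
    have hcomb : (μ^5 + 2*((n:ℝ)-1)*((n:ℝ)-2)*μ) • w = (s*μ^3) • w := by
      have e1 : (A^5 + (2*((n:ℝ)-1)*((n:ℝ)-2)) • A).mulVec w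
          = (μ^5 + 2*((n:ℝ)-1)*((n:ℝ)-2)*μ) • w := by
        rw [Matrix.add_mulVec, Matrix.smul_mulVec, h5, hAw, smul_smul, ← add_smul]
      have e2 : ((s : ℝ) • A^3).mulVec w = (s*μ^3) • w := by
        rw [Matrix.smul_mulVec, h3, smul_smul]
      rw [← e1, ← e2, hkey]
    obtain ⟨i, hi⟩ := Function.ne_iff.mp hw0
    have hsc : μ^5 + 2*((n:ℝ)-1)*((n:ℝ)-2)*μ = s*μ^3 := by
      have := congrFun hcomb i
      simp only [Pi.smul_apply, smul_eq_mul] at this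
      exact mul_right_cancel₀ (by simpa using hi) this
    rcases le_or_gt μ 0 with hneg | hpos
    · exact hneg.trans hrho_pos.le
    · have h4 : μ^4 - s*μ^2 + 2*((n:ℝ)-1)*((n:ℝ)-2) = 0 := by
        have hfac : μ * (μ^4 - s*μ^2 + 2*((n:ℝ)-1)*((n:ℝ)-2)) = 0 := by
          linear_combination hsc
        rcases mul_eq_zero.mp hfac with h | h
        · exact absurd h hpos.ne'
        · exact h
      have hμ2 : μ^2 ≤ lam := by
        by_contra hc
        push_neg at hc
        have hge : s/2 ≤ lam := by rw [hlam]; linarith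
        have hprod : (μ^2 - lam) * (μ^2 - (s - lam)) = 0 := by
          linear_combination h4 - hlam_eq
        have hp1 : 0 < μ^2 - lam := by linarith
        have hp2 : 0 < μ^2 - (s - lam) := by linarith
        nlinarith [mul_pos hp1 hp2]
      exact hrho_le μ hpos hμ2
  have hsup : specRad (Qgraph n 1) = rho :=
    le_antisymm (csSup_le ⟨rho, hmem⟩ hub) (le_csSup ⟨rho, fun μ h => hub μ h⟩ hmem)
  constructor
  · rw [hsup]
    linear_combination hlam_eq + (rho^2 + lam - s) * hrho2
  · rw [hsup, hrho2, hlam]
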